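/- For every real δ > 0 there exists v₀ such that for every prime p and every integer v ≥ v₀ there exist a positive integer m and a finite set S ⊆ (ℤ/pℤ)^m × (ℤ/pℤ)^m with |π₁(S)| + |π₂(S)| + |{x + y : (x, y) ∈ S}| ≤ v and |S| ≥ (1 − δ)·v²/49, where π₁(S) and π₂(S) denote the images of S under the two coordinate projections. -/

import Mathlib

open Finset

private def psiAux (p k : ℕ) (x : (Fin k → ZMod p) × ℕ) : Fin (k+1) → ZMod p :=
  fun i => if h : (i : ℕ) < k then x.1 ⟨i, h⟩ else (x.2 : ZMod p)

private lemma psiAux_add (p k : ℕ) (x y : (Fin k → ZMod p) × ℕ) :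
    psiAux p k x + psiAux p k y = psiAux p k (x.1 + y.1, x.2 + y.2) := by
  funext i
  simp only [psiAux, Pi.add_apply]
  split_ifs with h
  · rfl
  · exact (Nat.cast_add _ _).symm

private lemma psiAux_injOn (p k s : ℕ) [NeZero p] (hs : s ≤ p) :
    Set.InjOn (psiAux p k) (((Finset.univ ×ˢ Finset.range s : Finset ((Fin k → ZMod p) × ℕ))) : Set ((Fin k → ZMod p) × ℕ)) := by
  rintro ⟨a, j⟩ hx ⟨b, j'⟩ hy hxy
  have hj : j < s := by
    have := (Finset.mem_product.mp (Finset.mem_coe.mp hx)).2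
    simpa using this
  have hj' : j' < s := by
    have := (Finset.mem_product.mp (Finset.mem_coe.mp hy)).2
    simpa using this
  have hab : a = b := by
    funext i
    have h2 := congrFun hxy ⟨i.1, by omega⟩
    simp only [psiAux] at h2
    rw [dif_pos i.2, dif_pos i.2] at h2
    simpa using h2
  have hjj : j = j' := by
    have h2 := congrFun hxy ⟨k, Nat.lt_succ_self k⟩
    simp only [psiAux, dif_neg (lt_irrefl k)] at h2
    have := congrArg ZMod.val h2
    rwa [ZMod.val_cast_of_lt (lt_of_lt_of_le hj hs),
      ZMod.val_cast_of_lt (lt_of_lt_of_le hj' hs)] at this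
  simp [hab, hjj]

private lemma card_T (p k s : ℕ) [NeZero p] (hs : s ≤ p) :
    ((Finset.univ ×ˢ Finset.range s).image (psiAux p k)).card = p^k * s := by
  rw [Finset.card_image_of_injOn (psiAux_injOn p k s hs), Finset.card_product,
    Finset.card_univ, Finset.card_range]
  congr 1
  simp [ZMod.card]

private lemma construction (p k t r v : ℕ) [NeZero p] (htp : 2*t+1 ≤ p)
    (hr : r ≤ p^k * (t+1)) (hv : 2*r + p^k*(2*t+1) ≤ v) :
    ∃ S : Finset ((Fin (k+1) → ZMod p) × (Fin (k+1) → ZMod p)),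
      (S.image Prod.fst).card + (S.image Prod.snd).card
        + (S.image fun xy => xy.1 + xy.2).card ≤ v ∧ S.card = r * r := by
  classical
  set T1 := (Finset.univ ×ˢ Finset.range (t+1)).image (psiAux p k) with hT1
  set T2 := (Finset.univ ×ˢ Finset.range (2*t+1)).image (psiAux p k) with hT2
  have hcard1 : T1.card = p^k * (t+1) := card_T p k (t+1) (by omega)
  have hcard2 : T2.card = p^k * (2*t+1) := card_T p k (2*t+1) htp
  obtain ⟨F, hFsub, hFcard⟩ := Finset.exists_subset_card_eq (s := T1) (n := r) (by rw [hcard1]; exact hr)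
  refine ⟨F ×ˢ F, ?_, by rw [Finset.card_product, hFcard]⟩
  have hfst : (F ×ˢ F).image Prod.fst ⊆ F := by
    intro x hx
    obtain ⟨y, hy, rfl⟩ := Finset.mem_image.mp hx
    exact (Finset.mem_product.mp hy).1
  have hsnd : (F ×ˢ F).image Prod.snd ⊆ F := by
    intro x hx
    obtain ⟨y, hy, rfl⟩ := Finset.mem_image.mp hx
    exact (Finset.mem_product.mp hy).2
  have hsum : (F ×ˢ F).image (fun xy => xy.1 + xy.2) ⊆ T2 := by
    intro x hx
    obtain ⟨⟨a, b⟩, hy, rfl⟩ := Finset.mem_image.mp hx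
    have ha := hFsub (Finset.mem_product.mp hy).1
    have hb := hFsub (Finset.mem_product.mp hy).2
    rw [hT1] at ha hb
    obtain ⟨⟨xa, ja⟩, hxa, rfl⟩ := Finset.mem_image.mp ha
    obtain ⟨⟨xb, jb⟩, hxb, rfl⟩ := Finset.mem_image.mp hb
    have hja : ja < t+1 := by simpa using (Finset.mem_product.mp hxa).2
    have hjb : jb < t+1 := by simpa using (Finset.mem_product.mp hxb).2
    rw [psiAux_add]
    refine Finset.mem_image.mpr ⟨(xa + xb, ja + jb), ?_, rfl⟩
    exact Finset.mem_product.mpr ⟨Finset.mem_univ _, Finset.mem_range.mpr (by omega)⟩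
  have b1 := Finset.card_le_card hfst
  have b2 := Finset.card_le_card hsnd
  have b3 := Finset.card_le_card hsum
  omega

private lemma cover (p v P : ℕ) (hp : 2 ≤ p) (hodd : p = 2 ∨ p % 2 = 1)
    (hP : 1 ≤ P) (h1 : 3*P ≤ v) (h2 : v < 3*(P*p)) :
    ∃ t r, 2*t+1 ≤ p ∧ r ≤ P*(t+1) ∧ 2*r + P*(2*t+1) ≤ v ∧ v ≤ 7*r+7 := by
  obtain ⟨q, w, hw1, hw2⟩ : ∃ q w, v = P*q + w ∧ w < P :=
    ⟨v/P, v%P, by rw [Nat.div_add_mod], Nat.mod_lt _ (by omega)⟩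
  have hq3 : q < 3*p := by
    by_contra hc
    push_neg at hc
    have : P*(3*p) ≤ P*q := Nat.mul_le_mul_left _ hc
    have e : P*(3*p) = 3*(P*p) := by ring
    omega
  rcases le_or_gt q 6 with hq6 | hq6
  · -- t = 0, r = P
    refine ⟨0, P, by omega, by omega, by omega, ?_⟩
    have : P*q ≤ P*6 := Nat.mul_le_mul_left _ hq6
    have e : P*6 = 6*P := by ring
    omega
  rcases le_or_gt q (2*p) with hq2p | hq2p
  · -- middle case: t+1 = (q+5)/4
    have hpodd : p % 2 = 1 := by rcases hodd with h | h <;> omega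
    set t := (q+1)/4 with ht
    have ht1 : 2*t+1 ≤ p := by omega
    have ht2 : q ≤ 4*t+2 := by omega
    have ht3 : 14*t+7 ≤ 5*q := by omega
    have i1 : P*(q+1) ≤ P*(4*t+3) := Nat.mul_le_mul_left _ (by omega)
    have e1 : P*(q+1) = P*q + P := by ring
    have e2 : P*(4*t+3) = P*(2*t+1) + 2*(P*(t+1)) := by ring
    have i2 : 7*(P*(2*t+1)) ≤ 5*(P*q) := by
      calc 7*(P*(2*t+1)) = P*(14*t+7) := by ring
      _ ≤ P*(5*q) := Nat.mul_le_mul_left _ ht3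
      _ = 5*(P*q) := by ring
    obtain ⟨r, s, hr1, hr2⟩ : ∃ r s, v - P*(2*t+1) = 2*r + s ∧ s < 2 :=
      ⟨(v - P*(2*t+1))/2, (v - P*(2*t+1))%2, by rw [Nat.div_add_mod], Nat.mod_lt _ (by omega)⟩
    exact ⟨t, r, ht1, by omega, by omega, by omega⟩
  · -- large case: t+1 = (p+1)/2
    set t := (p+1)/2 - 1 with ht
    have ht1 : 2*t+1 ≤ p := by omega
    have i1 : P*(4*t+3) ≤ P*q := Nat.mul_le_mul_left _ (by omega)
    have e2 : P*(4*t+3) = P*(2*t+1) + 2*(P*(t+1)) := by ring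
    have i2 : P*(3*p) ≤ P*(7*(t+1)) := Nat.mul_le_mul_left _ (by omega)
    have e3 : P*(3*p) = 3*(P*p) := by ring
    have e4 : P*(7*(t+1)) = 7*(P*(t+1)) := by ring
    exact ⟨t, P*(t+1), ht1, le_rfl, by omega, by omega⟩

private lemma keyNat (p v : ℕ) (hp : 2 ≤ p) (hodd : p = 2 ∨ p % 2 = 1) (hv : 3 ≤ v) :
    ∃ k t r, 2*t+1 ≤ p ∧ r ≤ p^k*(t+1) ∧ 2*r + p^k*(2*t+1) ≤ v ∧ v ≤ 7*r+7 := by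
  set k := Nat.log p (v/3) with hk
  have hP : 1 ≤ p^k := Nat.one_le_pow _ _ (by omega)
  have h1 : 3 * p^k ≤ v := by
    have h3 := Nat.pow_log_le_self p (show v/3 ≠ 0 by omega)
    rw [← hk] at h3
    omega
  have h2 : v < 3 * (p^k * p) := by
    have h3 := Nat.lt_pow_succ_log_self (show 1 < p by omega) (v/3)
    rw [pow_succ, ← hk] at h3
    omega
  obtain ⟨t, r, ht, hr, hs, hl⟩ := cover p v (p^k) hp hodd hP h1 h2
  exact ⟨k, t, r, ht, hr, hs, hl⟩

theorem stmt_14 :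
    ∀ δ : ℝ, 0 < δ →
    ∃ v₀ : ℕ, ∀ p : ℕ, p.Prime → ∀ v : ℕ, v₀ ≤ v →
      ∃ m : ℕ, 0 < m ∧
        ∃ S : Finset ((Fin m → ZMod p) × (Fin m → ZMod p)),
          (S.image Prod.fst).card + (S.image Prod.snd).card
            + (S.image fun xy => xy.1 + xy.2).card ≤ v ∧
          (1 - δ) * (v : ℝ) ^ 2 / 49 ≤ (S.card : ℝ) := by
  intro δ hδ
  refine ⟨Nat.ceil (14/δ) + 7, ?_⟩
  intro p hp v hv
  haveI : NeZero p := ⟨hp.pos.ne'⟩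
  have hp2 : 2 ≤ p := hp.two_le
  have hodd : p = 2 ∨ p % 2 = 1 := by
    rcases eq_or_ne p 2 with h | h
    · exact Or.inl h
    · exact Or.inr (Nat.odd_iff.mp (hp.odd_of_ne_two h))
  obtain ⟨k, t, r, htp, hrle, hsum, hlow⟩ := keyNat p v hp2 hodd (by omega)
  obtain ⟨S, hS1, hS2⟩ := construction p k t r v htp hrle hsum
  refine ⟨k+1, Nat.succ_pos k, S, hS1, ?_⟩
  rw [hS2]
  have h7 : (v:ℝ) ≤ 7*r + 7 := by exact_mod_cast hlow
  have hδv : (14:ℝ) ≤ δ * v := by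
    have hvv : (14/δ : ℝ) ≤ v := by
      have hcl : Nat.ceil ((14:ℝ)/δ) ≤ v := by omega
      exact_mod_cast (Nat.ceil_le.mp hcl)
    calc (14:ℝ) = δ * (14/δ) := by field_simp
    _ ≤ δ * v := mul_le_mul_of_nonneg_left hvv hδ.le
  have hv7 : (7:ℝ) ≤ v := by exact_mod_cast (show 7 ≤ v by omega)
  have hr0 : (0:ℝ) ≤ r := Nat.cast_nonneg r
  rw [div_le_iff₀ (by norm_num : (0:ℝ) < 49)]
  push_cast
  have key2 : ((v:ℝ)-7)*((v:ℝ)-7) ≤ (7*r)*(7*r) :=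
    mul_le_mul (by linarith) (by linarith) (by linarith) (by positivity)
  have key3 : (14:ℝ)*v ≤ δ*v*v :=
    mul_le_mul_of_nonneg_right hδv (by linarith)
  nlinarith [key2, key3]
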